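/- The von Dyck group G₀(2,3,6), i.e. the presented group ⟨x, y, z ∣ x² = y³ = z⁶ = xyz = 1⟩ (the quotient of the free group on three generators x, y, z by the normal closure of the relators x², y³, z⁶, xyz), has Grossman's Property A. -/
import Mathlib

/-- A group `G` has Grossman's Property A if every class-preserving automorphism
(i.e. one sending each element to a conjugate of itself) is inner. -/
def HasPropertyA (G : Type*) [Group G] : Prop :=
  ∀ φ : G ≃* G, (∀ g : G, IsConj g (φ g)) → ∃ h : G, ∀ g : G, φ g = h * g * h⁻¹

/-- The relators of the von Dyck group `G₀(p,q,r) = ⟨x, y, z ∣ xᵖ = y^q = z^r = xyz = 1⟩`. -/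
def vonDyckRels (p q r : ℕ) : Set (FreeGroup (Fin 3)) :=
  {(FreeGroup.of 0) ^ p, (FreeGroup.of 1) ^ q, (FreeGroup.of 2) ^ r,
    FreeGroup.of 0 * FreeGroup.of 1 * FreeGroup.of 2}

set_option linter.unnecessarySeqFocus false
set_option linter.unreachableTactic false
set_option linter.unusedTactic false

namespace VonDyck236


/-- Rotation by 60 degrees on the hexagonal lattice (multiplication by a primitive
sixth root of unity on the Eisenstein integers). -/
def rot (v : ℤ × ℤ) : ℤ × ℤ := (-v.2, v.1 + v.2)

lemma rot_add (v w : ℤ × ℤ) : rot (v + w) = rot v + rot w := by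
  simp only [rot, Prod.ext_iff, Prod.snd_add, Prod.fst_add]
  constructor <;> ring

lemma rot_six (v : ℤ × ℤ) : rot^[6] v = v := by
  obtain ⟨a, b⟩ := v
  show rot (rot (rot (rot (rot (rot (a, b)))))) = (a, b)
  simp only [rot, Prod.ext_iff]
  constructor <;> ring

lemma rot_six_mul (q : ℕ) (v : ℤ × ℤ) : rot^[6 * q] v = v := by
  induction q with
  | zero => rfl
  | succ m ih => rw [Nat.mul_succ, Function.iterate_add_apply, rot_six, ih]

lemma rot_iterate_mod (n : ℕ) (v : ℤ × ℤ) : rot^[n % 6] v = rot^[n] v := by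
  conv_rhs => rw [← Nat.div_add_mod n 6, add_comm, Function.iterate_add_apply, rot_six_mul]

lemma rot_iterate_add (n : ℕ) (v w : ℤ × ℤ) :
    rot^[n] (v + w) = rot^[n] v + rot^[n] w := by
  induction n with
  | zero => rfl
  | succ m ih => rw [Function.iterate_succ_apply', Function.iterate_succ_apply',
      Function.iterate_succ_apply', ih, rot_add]

/-- The underlying set of the concrete model `ℤ² ⋊ ℤ/6` of the (2,3,6) von Dyck group. -/
@[ext] structure Dyk where
  v : ℤ × ℤ
  k : ZMod 6
deriving DecidableEq

/-- The action of `ℤ/6` on `ℤ²` by powers of the rotation. -/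
def ρ (k : ZMod 6) (v : ℤ × ℤ) : ℤ × ℤ := rot^[k.val] v

lemma ρ_add_exp (k l : ZMod 6) (v : ℤ × ℤ) : ρ (k + l) v = ρ k (ρ l v) := by
  unfold ρ
  rw [← Function.iterate_add_apply, ZMod.val_add, rot_iterate_mod]

lemma ρ_zero (v : ℤ × ℤ) : ρ 0 v = v := rfl

lemma ρ_add (k : ZMod 6) (v w : ℤ × ℤ) : ρ k (v + w) = ρ k v + ρ k w :=
  rot_iterate_add _ _ _

lemma ρ_zero_v (k : ZMod 6) : ρ k 0 = 0 := by
  have := ρ_add k 0 0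
  simpa using this.symm

lemma ρ_neg (k : ZMod 6) (v : ℤ × ℤ) : ρ k (-v) = -ρ k v := by
  have h := ρ_add k v (-v)
  simp only [add_neg_cancel, ρ_zero_v] at h
  exact eq_neg_of_add_eq_zero_right h.symm

instance : Mul Dyk := ⟨fun a b => ⟨a.v + ρ a.k b.v, a.k + b.k⟩⟩
instance : One Dyk := ⟨⟨0, 0⟩⟩
instance : Inv Dyk := ⟨fun a => ⟨-ρ (-a.k) a.v, -a.k⟩⟩

lemma mul_def (a b : Dyk) : a * b = ⟨a.v + ρ a.k b.v, a.k + b.k⟩ := rfl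
lemma one_def : (1 : Dyk) = ⟨0, 0⟩ := rfl
lemma inv_def (a : Dyk) : a⁻¹ = ⟨-ρ (-a.k) a.v, -a.k⟩ := rfl

instance : Group Dyk :=
  Group.ofLeftAxioms
    (fun a b c => by
      simp only [mul_def]
      ext1
      · rw [ρ_add, ρ_add_exp]; abel_nf
      · exact add_assoc _ _ _)
    (fun a => by simp [mul_def, one_def, ρ_zero])
    (fun a => by
      simp only [mul_def, inv_def, one_def]
      ext1
      · simp
      · simp)

lemma key_finite : ∀ a b c d : ZMod 6,
    ρ c ((1,1) : ℤ × ℤ) = ρ a (1,0) + ρ b (0,1) →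
    ρ d ((2,1) : ℤ × ℤ) = ρ a (1,0) + (ρ a (1,0) + ρ b (0,1)) →
    ρ b ((0,1) : ℤ × ℤ) = ρ a (0,1) := by decide

lemma conj_formula (a b : Dyk) :
    a * b * a⁻¹ = ⟨a.v + ρ a.k b.v - ρ b.k a.v, b.k⟩ := by
  simp only [mul_def, inv_def]
  ext1
  · show a.v + ρ a.k b.v + ρ (a.k + b.k) (-ρ (-a.k) a.v) = _
    rw [ρ_neg, ← ρ_add_exp]
    have : a.k + b.k + -a.k = b.k := by ring
    rw [this]; abel_nf
  · show a.k + b.k + -a.k = b.k; ring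

/-- The additive homomorphism `ρ k` on the lattice. -/
def ρhom (k : ZMod 6) : ℤ × ℤ →+ ℤ × ℤ where
  toFun := ρ k
  map_zero' := ρ_zero_v k
  map_add' := ρ_add k

lemma s_pow (n : ℕ) : (⟨0, 1⟩ : Dyk) ^ n = ⟨0, (n : ZMod 6)⟩ := by
  induction n with
  | zero => rfl
  | succ m ih =>
      rw [pow_succ, ih, mul_def]
      ext1
      · show (0 : ℤ × ℤ) + ρ _ 0 = 0; rw [ρ_zero_v]; simp
      · push_cast; rfl

lemma decomp (g : Dyk) : g = ⟨g.v, 0⟩ * (⟨0, 1⟩ : Dyk) ^ (g.k.val) := by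
  rw [s_pow, mul_def]
  ext1
  · show g.v = g.v + ρ 0 0; rw [ρ_zero_v]; simp
  · show g.k = 0 + (g.k.val : ZMod 6)
    rw [ZMod.natCast_val, ZMod.cast_id]; simp

theorem dyk_propertyA :
    ∀ φ : Dyk ≃* Dyk, (∀ g : Dyk, IsConj g (φ g)) → ∃ h : Dyk, ∀ g : Dyk, φ g = h * g * h⁻¹ := by
  intro φ hconj
  -- the automorphism preserves the rotation part
  have hk : ∀ g : Dyk, (φ g).k = g.k := by
    intro g
    obtain ⟨c, hc⟩ := isConj_iff.mp (hconj g)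
    rw [← hc, conj_formula]
  -- on translations, φ acts as some rotation (depending on the point)
  have horb : ∀ v : ℤ × ℤ, ∃ j : ZMod 6, φ ⟨v, 0⟩ = ⟨ρ j v, 0⟩ := by
    intro v
    obtain ⟨c, hc⟩ := isConj_iff.mp (hconj ⟨v, 0⟩)
    refine ⟨c.k, ?_⟩
    rw [← hc, conj_formula]
    ext1
    · show c.v + ρ c.k v - ρ 0 c.v = ρ c.k v
      rw [ρ_zero, add_sub_cancel_left]
    · rfl
  -- φ restricted to translations, as an additive endomorphism of the lattice
  have hmapadd : ∀ v w : ℤ × ℤ, (φ ⟨v + w, 0⟩).v = (φ ⟨v, 0⟩).v + (φ ⟨w, 0⟩).v := by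
    intro v w
    have h1 : (⟨v + w, (0 : ZMod 6)⟩ : Dyk) = ⟨v, 0⟩ * ⟨w, 0⟩ := by
      rw [mul_def]; ext1
      · show v + w = v + ρ 0 w; rw [ρ_zero]
      · simp
    rw [h1, map_mul, mul_def]
    show (φ ⟨v, 0⟩).v + ρ ((φ ⟨v,0⟩).k) (φ ⟨w, 0⟩).v = _
    rw [hk, ρ_zero]
  -- find the global rotation
  obtain ⟨a, ha⟩ := horb (1, 0)
  obtain ⟨b, hb⟩ := horb (0, 1)
  obtain ⟨c, hcv⟩ := horb (1, 1)
  obtain ⟨d, hd⟩ := horb (2, 1)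
  have hab : ρ b ((0,1) : ℤ × ℤ) = ρ a (0,1) := by
    apply key_finite a b c d
    · have h4 : ((1,0) + (0,1) : ℤ × ℤ) = (1,1) := by decide
      have := hmapadd (1, 0) (0, 1)
      rw [h4, ha, hb, hcv] at this
      simpa using this
    · have h3 : ((1,0) + (1,1) : ℤ × ℤ) = (2,1) := by decide
      have h4 : ((1,0) + (0,1) : ℤ × ℤ) = (1,1) := by decide
      have h2 := hmapadd (1, 0) (0, 1)
      rw [h4, ha, hb, hcv] at h2
      have := hmapadd (1, 0) (1, 1)
      rw [h3, ha, hcv, hd] at this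
      simp only [] at this h2
      rw [this, h2]
  -- φ equals ρ a on all translations
  have htrans : ∀ v : ℤ × ℤ, φ ⟨v, 0⟩ = ⟨ρ a v, 0⟩ := by
    intro v
    have hvdec : v = v.1 • ((1,0) : ℤ × ℤ) + v.2 • ((0,1) : ℤ × ℤ) := by
      simp [Prod.ext_iff]
    have hsmul : ∀ (n : ℤ) (w : ℤ × ℤ), (φ ⟨n • w, 0⟩).v = n • (φ ⟨w, 0⟩).v := by
      intro n w
      have : ∀ u : ℤ × ℤ, (φ ⟨u, 0⟩).v = (AddMonoidHom.mk' (fun u => (φ ⟨u, 0⟩).v) hmapadd) u :=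
        fun _ => rfl
      rw [this, this, map_zsmul]
    ext1
    · show (φ ⟨v, 0⟩).v = ρ a v
      calc (φ ⟨v, 0⟩).v = (φ ⟨v.1 • ((1,0) : ℤ × ℤ) + v.2 • ((0,1) : ℤ × ℤ), 0⟩).v := by
            rw [← hvdec]
        _ = v.1 • (φ ⟨((1,0) : ℤ × ℤ), 0⟩).v + v.2 • (φ ⟨((0,1) : ℤ × ℤ), 0⟩).v := by
            rw [hmapadd, hsmul, hsmul]
        _ = v.1 • ρ a ((1,0) : ℤ × ℤ) + v.2 • ρ a ((0,1) : ℤ × ℤ) := by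
            rw [ha, hb, hab]
        _ = ρhom a (v.1 • ((1,0) : ℤ × ℤ) + v.2 • ((0,1) : ℤ × ℤ)) := by
            rw [map_add, map_zsmul, map_zsmul]; rfl
        _ = ρ a v := by rw [← hvdec]; rfl
    · rw [hk]
  -- build the conjugating element
  set w : ℤ × ℤ := (φ ⟨0, 1⟩).v with hw
  set p : ℤ × ℤ := (-w.2, w.1 + w.2) with hp
  refine ⟨⟨p, a⟩, ?_⟩
  have hsk : (φ ⟨0, 1⟩).k = 1 := hk _
  have hφs : φ ⟨0, 1⟩ = ⟨w, 1⟩ := by ext1 <;> simp [hw, hsk]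
  have hconjs : (⟨p, a⟩ : Dyk) * ⟨0, 1⟩ * (⟨p, a⟩ : Dyk)⁻¹ = ⟨w, 1⟩ := by
    rw [conj_formula]
    ext1
    · show p + ρ a 0 - ρ 1 p = w
      rw [ρ_zero_v]
      show p + 0 - rot^[(1 : ZMod 6).val] p = w
      have : ((1 : ZMod 6)).val = 1 := rfl
      rw [this]
      simp only [Function.iterate_one, rot, hp, Prod.ext_iff]
      constructor <;> simp <;> ring
    · rfl
  intro g
  conv_lhs => rw [decomp g]
  conv_rhs => rw [decomp g]
  have congj : ∀ u : Dyk, (⟨p, a⟩ : Dyk) * u * (⟨p, a⟩ : Dyk)⁻¹ = (MulAut.conj (⟨p, a⟩ : Dyk)) u :=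
    fun _ => rfl
  rw [map_mul, map_pow, hφs]
  rw [congj, map_mul, map_pow]
  rw [← congj, ← congj, hconjs]
  congr 1
  rw [htrans, conj_formula]
  ext1
  · show ρ a g.v = p + ρ a g.v - ρ 0 p
    rw [ρ_zero, add_sub_cancel_left]
  · rfl



abbrev PG := PresentedGroup (vonDyckRels 2 3 6)

def x : PG := PresentedGroup.of 0
def y : PG := PresentedGroup.of 1
def z : PG := PresentedGroup.of 2

lemma mk_rel {r : FreeGroup (Fin 3)} (h : r ∈ vonDyckRels 2 3 6) :
    PresentedGroup.mk (vonDyckRels 2 3 6) r = 1 :=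
  (QuotientGroup.eq_one_iff r).mpr (Subgroup.subset_normalClosure h)

lemma hx2 : x ^ 2 = 1 := by
  have h := mk_rel (show ((FreeGroup.of 0) ^ 2 : FreeGroup (Fin 3)) ∈ vonDyckRels 2 3 6 from
    Set.mem_insert _ _)
  rw [map_pow] at h
  exact h

lemma hy3 : y ^ 3 = 1 := by
  have h := mk_rel (show ((FreeGroup.of 1) ^ 3 : FreeGroup (Fin 3)) ∈ vonDyckRels 2 3 6 from
    Set.mem_insert_iff.mpr (Or.inr (Set.mem_insert _ _)))
  rw [map_pow] at h
  exact h

lemma hz6 : z ^ 6 = 1 := by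
  have h := mk_rel (show ((FreeGroup.of 2) ^ 6 : FreeGroup (Fin 3)) ∈ vonDyckRels 2 3 6 from
    Set.mem_insert_iff.mpr (Or.inr (Set.mem_insert_iff.mpr (Or.inr (Set.mem_insert _ _)))))
  rw [map_pow] at h
  exact h

lemma hxyz : x * y * z = 1 := by
  have h := mk_rel (show (FreeGroup.of 0 * FreeGroup.of 1 * FreeGroup.of 2 : FreeGroup (Fin 3))
      ∈ vonDyckRels 2 3 6 from
    Set.mem_insert_iff.mpr (Or.inr (Set.mem_insert_iff.mpr (Or.inr
      (Set.mem_insert_iff.mpr (Or.inr rfl))))))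
  rw [map_mul, map_mul] at h
  exact h

lemma hxinv : x⁻¹ = x := by
  have := hx2
  rw [pow_two] at this
  exact inv_eq_of_mul_eq_one_right this

lemma hxx : x * x = 1 := by rw [← pow_two]; exact hx2

lemma hyval : y = x * z⁻¹ := by
  have h : y = x⁻¹ * (x * y * z) * z⁻¹ := by group
  rw [hxyz] at h
  rw [h, hxinv]
  group

lemma hkey : x * z⁻¹ * x = z * x * z := by
  have h3 : (x * z⁻¹) ^ 3 = 1 := by rw [← hyval, hy3]
  rw [pow_succ, pow_two] at h3
  have h4 : (x * z⁻¹) * (x * z⁻¹) = (x * z⁻¹)⁻¹ := eq_inv_of_mul_eq_one_left h3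
  calc x * z⁻¹ * x = ((x * z⁻¹) * (x * z⁻¹)) * z := by group
    _ = (x * z⁻¹)⁻¹ * z := by rw [h4]
    _ = z * x⁻¹ * z := by group
    _ = z * x * z := by rw [hxinv]

lemma hcomm : (x * z^3) * (z * x * z^2) = (z * x * z^2) * (x * z^3) := by
  have hD : (z*x*z) * (z*x*z) = x * z⁻¹ * z⁻¹ * x := by
    calc (z*x*z) * (z*x*z) = (x*z⁻¹*x) * (x*z⁻¹*x) := by rw [hkey]
      _ = x * z⁻¹ * (x * x) * (z⁻¹ * x) := by group
      _ = x * z⁻¹ * z⁻¹ * x := by rw [hxx]; group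
  have h6 : x * z^4 * x = (z*x*z) * (z*x*z) := by
    calc x * z^4 * x = x * z⁻¹ * z⁻¹ * x * (x⁻¹ * z^6 * x) := by group
      _ = x * z⁻¹ * z⁻¹ * x := by rw [hz6]; group
      _ = (z*x*z) * (z*x*z) := hD.symm
  calc (x * z^3) * (z * x * z^2) = (x * z^4 * x) * (x⁻¹ * (x * z^2)) := by group
    _ = ((z*x*z) * (z*x*z)) * (x⁻¹ * (x * z^2)) := by rw [h6]
    _ = (z * x * z^2) * (x * z^3) := by
        group <;> simp [pow_two, zpow_two, pow_succ, mul_assoc]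

lemma h8 : x * z * x = z⁻¹ * x * z⁻¹ := by
  rw [← hxinv]
  calc x⁻¹ * z * x⁻¹ = (x * z⁻¹ * x)⁻¹ := by group
    _ = (z * x * z)⁻¹ := by rw [hkey]
    _ = z⁻¹ * x⁻¹ * z⁻¹ := by group

lemma cB : z * (z * x * z^2) * z⁻¹ = (x * z^3)⁻¹ * (z * x * z^2) := by
  calc z * (z * x * z^2) * z⁻¹
      = (z^6) * (z⁻¹ * z⁻¹ * z⁻¹ * z⁻¹ * (x * z)) := by
        group <;> simp [pow_two, zpow_two, pow_succ, mul_assoc]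
    _ = z⁻¹ * z⁻¹ * z⁻¹ * z⁻¹ * (x * z) := by rw [hz6, one_mul]
    _ = z⁻¹ * z⁻¹ * z⁻¹ * ((z⁻¹ * x * z⁻¹) * (z * z)) := by group
    _ = z⁻¹ * z⁻¹ * z⁻¹ * ((x * z * x) * (z * z)) := by rw [h8]
    _ = (x * z^3)⁻¹ * (z * x * z^2) := by
        nth_rewrite 1 [← hxinv]
        group <;> simp [pow_two, zpow_two, pow_succ, mul_assoc]

lemma cA : z * (x * z^3) * z⁻¹ = z * x * z^2 := by group

def S : PG := z
def T1 : PG := x * z^3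
def T2 : PG := z * x * z^2

lemma commT : Commute T1 T2 := hcomm

lemma conj_S_T1 : S * T1 * S⁻¹ = T2 := cA

lemma conj_S_T2 : S * T2 * S⁻¹ = T1⁻¹ * T2 := cB

lemma conj_S_word (a b : ℤ) : S * (T1^a * T2^b) * S⁻¹ = T1^(-b) * T2^(a+b) := by
  have h : (MulAut.conj S) (T1^a * T2^b) = ((MulAut.conj S) T1)^a * ((MulAut.conj S) T2)^b := by
    rw [map_mul, map_zpow, map_zpow]
  simp only [MulAut.conj_apply] at h
  rw [h, conj_S_T1, conj_S_T2]
  calc T2^a * (T1⁻¹ * T2)^b = T2^a * ((T1⁻¹)^b * T2^b) := by rw [commT.inv_left.mul_zpow]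
    _ = T2^a * (T1^(-b) * T2^b) := by rw [inv_zpow', zpow_neg]
    _ = (T2^a * T1^(-b)) * T2^b := by rw [mul_assoc]
    _ = (T1^(-b) * T2^a) * T2^b := by rw [(commT.symm.zpow_zpow a (-b)).eq]
    _ = T1^(-b) * T2^(a+b) := by rw [mul_assoc, ← zpow_add]

lemma conj_Sn_word (n : ℕ) (v : ℤ × ℤ) :
    S^n * (T1^v.1 * T2^v.2) * (S^n)⁻¹ = T1^((rot^[n] v).1) * T2^((rot^[n] v).2) := by
  induction n with
  | zero => simp
  | succ m ih =>
      rw [pow_succ']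
      calc S * S^m * (T1^v.1 * T2^v.2) * (S * S^m)⁻¹
          = S * (S^m * (T1^v.1 * T2^v.2) * (S^m)⁻¹) * S⁻¹ := by group
        _ = S * (T1^((rot^[m] v).1) * T2^((rot^[m] v).2)) * S⁻¹ := by rw [ih]
        _ = T1^(-(rot^[m] v).2) * T2^((rot^[m] v).1 + (rot^[m] v).2) := conj_S_word _ _
        _ = T1^((rot^[m+1] v).1) * T2^((rot^[m+1] v).2) := by
            rw [Function.iterate_succ_apply']
            rfl


/-- The images in the concrete group of the three generators. -/
def X0 : Dyk := ⟨(1,0), 3⟩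
def Y0 : Dyk := ⟨(1,0), 2⟩
def Z0 : Dyk := ⟨0, 1⟩

lemma frels : ∀ r ∈ vonDyckRels 2 3 6, FreeGroup.lift (![X0, Y0, Z0] : Fin 3 → Dyk) r = 1 := by
  intro r hr
  simp only [vonDyckRels, Set.mem_insert_iff, Set.mem_singleton_iff] at hr
  rcases hr with rfl | rfl | rfl | rfl <;>
    simp only [map_pow, map_mul, FreeGroup.lift_apply_of] <;> decide

/-- The canonical homomorphism from the presented group to the concrete group. -/
def F : PG →* Dyk := PresentedGroup.toGroup frels

lemma F_x : F x = X0 := PresentedGroup.toGroup.of frels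
lemma F_y : F y = Y0 := PresentedGroup.toGroup.of frels
lemma F_z : F z = Z0 := PresentedGroup.toGroup.of frels

/-- The translation subgroup of the concrete group. -/
def transHom : Multiplicative (ℤ × ℤ) →* Dyk :=
  MonoidHom.mk' (fun u => ⟨u.toAdd, 0⟩) (by
    intro u v
    rw [mul_def]
    ext1
    · show (u * v).toAdd = u.toAdd + ρ 0 v.toAdd
      rw [ρ_zero]; rfl
    · simp)

lemma t1_zpow (n : ℤ) : (⟨(1,0), 0⟩ : Dyk) ^ n = ⟨(n,0), 0⟩ := by
  have h : (⟨(1,0), 0⟩ : Dyk) = transHom (Multiplicative.ofAdd ((1,0) : ℤ × ℤ)) := rfl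
  rw [h, ← map_zpow, ← ofAdd_zsmul]
  show (⟨n • ((1,0) : ℤ × ℤ), 0⟩ : Dyk) = _
  norm_num [Prod.ext_iff]

lemma t2_zpow (n : ℤ) : (⟨(0,1), 0⟩ : Dyk) ^ n = ⟨(0,n), 0⟩ := by
  have h : (⟨(0,1), 0⟩ : Dyk) = transHom (Multiplicative.ofAdd ((0,1) : ℤ × ℤ)) := rfl
  rw [h, ← map_zpow, ← ofAdd_zsmul]
  show (⟨n • ((0,1) : ℤ × ℤ), 0⟩ : Dyk) = _
  norm_num [Prod.ext_iff]

lemma Spow_val (k l : ZMod 6) : S ^ ((k + l).val) = S ^ (k.val + l.val) := by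
  rw [ZMod.val_add]
  exact (pow_eq_pow_mod _ hz6).symm

/-- The inverse homomorphism, from the concrete group to the presented group. -/
def G : Dyk →* PG := MonoidHom.mk' (fun m => T1 ^ m.v.1 * T2 ^ m.v.2 * S ^ m.k.val) (by
  intro m m'
  show T1 ^ ((m * m').v.1) * T2 ^ ((m * m').v.2) * S ^ ((m * m').k.val) = _
  have hmv : (m * m').v = m.v + ρ m.k m'.v := rfl
  have hmk : (m * m').k = m.k + m'.k := rfl
  rw [hmv, hmk, Prod.fst_add, Prod.snd_add, Spow_val]
  have hconj := conj_Sn_word m.k.val m'.v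
  have hρ : ∀ w : ℤ × ℤ, rot^[m.k.val] w = ρ m.k w := fun _ => rfl
  rw [hρ] at hconj
  calc T1 ^ (m.v.1 + (ρ m.k m'.v).1) * T2 ^ (m.v.2 + (ρ m.k m'.v).2) * S ^ (m.k.val + m'.k.val)
      = (T1 ^ m.v.1 * ((T1 ^ (ρ m.k m'.v).1 * T2 ^ m.v.2) * T2 ^ (ρ m.k m'.v).2)) *
        (S ^ m.k.val * S ^ m'.k.val) := by
        rw [zpow_add, zpow_add, pow_add]; group
    _ = (T1 ^ m.v.1 * ((T2 ^ m.v.2 * T1 ^ (ρ m.k m'.v).1) * T2 ^ (ρ m.k m'.v).2)) *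
        (S ^ m.k.val * S ^ m'.k.val) := by
        rw [(commT.zpow_zpow _ _).eq]
    _ = (T1 ^ m.v.1 * T2 ^ m.v.2) *
        ((S ^ m.k.val * (T1 ^ m'.v.1 * T2 ^ m'.v.2) * (S ^ m.k.val)⁻¹) *
          S ^ m.k.val) * S ^ m'.k.val := by
        rw [hconj]; group
    _ = T1 ^ m.v.1 * T2 ^ m.v.2 * S ^ m.k.val *
        (T1 ^ m'.v.1 * T2 ^ m'.v.2 * S ^ m'.k.val) := by group)

lemma G_apply (m : Dyk) : G m = T1 ^ m.v.1 * T2 ^ m.v.2 * S ^ m.k.val := rfl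

lemma F_T1 : F T1 = ⟨(1,0), 0⟩ := by
  show F (x * z^3) = _
  rw [map_mul, map_pow, F_x, F_z]
  decide

lemma F_T2 : F T2 = ⟨(0,1), 0⟩ := by
  show F (z * x * z^2) = _
  rw [map_mul, map_mul, map_pow, F_x, F_z]
  decide

lemma F_S : F S = Z0 := F_z

lemma FG : ∀ m : Dyk, F (G m) = m := by
  intro m
  rw [G_apply, map_mul, map_mul, map_zpow, map_zpow, map_pow, F_T1, F_T2, F_S,
    t1_zpow, t2_zpow]
  have h1 : (⟨(m.v.1, 0), 0⟩ : Dyk) * ⟨(0, m.v.2), 0⟩ = ⟨m.v, 0⟩ := by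
    rw [mul_def]
    ext1
    · show (m.v.1, (0:ℤ)) + ρ 0 (0, m.v.2) = m.v
      rw [ρ_zero]
      ext <;> simp
    · simp
  rw [h1]
  show (⟨m.v, 0⟩ : Dyk) * (⟨0, 1⟩ : Dyk) ^ m.k.val = m
  exact (decomp m).symm

lemma GF : G.comp F = MonoidHom.id PG := by
  apply PresentedGroup.ext
  intro i
  fin_cases i
  · show G (F x) = x
    rw [F_x]
    show T1 ^ (1:ℤ) * T2 ^ (0:ℤ) * S ^ ((3 : ZMod 6).val) = x
    have hv : ((3 : ZMod 6)).val = 3 := rfl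
    rw [hv, zpow_one, zpow_zero, mul_one]
    show x * z^3 * z^3 = x
    calc x * z^3 * z^3 = x * z^6 := by group <;> simp [pow_two, zpow_two, pow_succ, mul_assoc]
      _ = x := by rw [hz6, mul_one]
  · show G (F y) = y
    rw [F_y]
    show T1 ^ (1:ℤ) * T2 ^ (0:ℤ) * S ^ ((2 : ZMod 6).val) = y
    have hv : ((2 : ZMod 6)).val = 2 := rfl
    rw [hv, zpow_one, zpow_zero, mul_one]
    show x * z^3 * z^2 = y
    calc x * z^3 * z^2 = x * z⁻¹ * z^6 := by group <;> simp [pow_two, zpow_two, pow_succ, mul_assoc]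
      _ = x * z⁻¹ := by rw [hz6, mul_one]
      _ = y := hyval.symm
  · show G (F z) = z
    rw [F_z]
    show T1 ^ (0:ℤ) * T2 ^ (0:ℤ) * S ^ ((1 : ZMod 6).val) = z
    have hv : ((1 : ZMod 6)).val = 1 := rfl
    rw [hv, zpow_zero, zpow_zero, mul_one, one_mul, pow_one]
    rfl

/-- The isomorphism between the concrete group and the presented group. -/
def e : Dyk ≃* PG := MonoidHom.toMulEquiv G F (MonoidHom.ext FG) GF

end VonDyck236

theorem vonDyck_236_propertyA : HasPropertyA (PresentedGroup (vonDyckRels 2 3 6)) := by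
  intro φ hφ
  set ψ : VonDyck236.Dyk ≃* VonDyck236.Dyk :=
    (VonDyck236.e.trans φ).trans VonDyck236.e.symm with hψdef
  have hψ : ∀ g, IsConj g (ψ g) := by
    intro g
    have h1 := hφ (VonDyck236.e g)
    have h2 := VonDyck236.e.symm.toMonoidHom.map_isConj h1
    simpa [hψdef] using h2
  obtain ⟨h, hh⟩ := VonDyck236.dyk_propertyA ψ hψ
  refine ⟨VonDyck236.e h, fun g => ?_⟩
  have h3 := hh (VonDyck236.e.symm g)
  calc φ g = VonDyck236.e (ψ (VonDyck236.e.symm g)) := by simp [hψdef]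
    _ = VonDyck236.e (h * VonDyck236.e.symm g * h⁻¹) := by rw [h3]
    _ = VonDyck236.e h * g * (VonDyck236.e h)⁻¹ := by
        rw [map_mul, map_mul, map_inv]
        simp
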